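/- Let 𝐂 be a cartesian closed category, let J be a nonempty connected category, let D : J → 𝐂 be a diagram with colimit X = colim_j D(j), and let p : A → B be a morphism of 𝐂. If p is orthogonal to D(j) for every object j of J, then p is orthogonal to X. -/

import Mathlib

open CategoryTheory CategoryTheory.Limits MonoidalCategory

universe v u

/-- In a category with (chosen) finite products, a morphism `p : A ⟶ B` is
*orthogonal* to an object `X` if every commuting square whose left edge is a
projection `Y ⊗ X ⟶ Y` and whose right edge is `p` has a unique diagonal filler. -/
def OrthogonalTo {𝒞 : Type u} [Category.{v} 𝒞] [CartesianMonoidalCategory 𝒞]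
    {A B : 𝒞} (p : A ⟶ B) (X : 𝒞) : Prop :=
  ∀ (Y : 𝒞) (f : Y ⊗ X ⟶ A) (g : Y ⟶ B),
    f ≫ p = CartesianMonoidalCategory.fst Y X ≫ g →
      ∃! h : Y ⟶ A, CartesianMonoidalCategory.fst Y X ≫ h = f ∧ h ≫ p = g

/-- If `p` is orthogonal to every object in a diagram indexed by a nonempty connected
category, then `p` is orthogonal to the colimit of the diagram. -/
theorem statement_8 {𝒞 : Type u} [Category.{v} 𝒞] [CartesianMonoidalCategory 𝒞]
    [MonoidalClosed 𝒞] {J : Type u₂} [Category.{v₂} J] [IsConnected J]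
    (D : J ⥤ 𝒞) (c : Limits.Cocone D) (hc : Limits.IsColimit c)
    {A B : 𝒞} (p : A ⟶ B) (h : ∀ j : J, OrthogonalTo p (D.obj j)) :
    OrthogonalTo p c.pt := by
  intro Y f g hfg
  -- the tensor functor preserves the colimit
  haveI : PreservesColimitsOfSize.{v₂, u₂} (tensorLeft Y) :=
    (ihom.adjunction Y).leftAdjoint_preservesColimits
  have hc' : IsColimit ((tensorLeft Y).mapCocone c) :=
    isColimitOfPreserves (tensorLeft Y) hc
  -- for each j, a unique filler h j
  have key : ∀ j : J, ∃! k : Y ⟶ A,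
      CartesianMonoidalCategory.fst Y (D.obj j) ≫ k = (Y ◁ c.ι.app j) ≫ f ∧ k ≫ p = g := by
    intro j
    refine h j Y ((Y ◁ c.ι.app j) ≫ f) g ?_
    rw [Category.assoc, hfg, ← Category.assoc,
      show (Y ◁ c.ι.app j) ≫ CartesianMonoidalCategory.fst Y c.pt =
        CartesianMonoidalCategory.fst Y (D.obj j) from CartesianMonoidalCategory.whiskerLeft_fst Y (c.ι.app j)]
  choose k hk huniq using key
  obtain ⟨j₀⟩ : Nonempty J := inferInstance
  -- k is constant on J
  have hconst : ∀ j j' : J, k j = k j' := by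
    apply constant_of_preserves_morphisms
    intro j j' φ
    refine ((huniq j (k j')) ⟨?_, (hk j').2⟩).symm
    have : CartesianMonoidalCategory.fst Y (D.obj j) =
        (Y ◁ D.map φ) ≫ CartesianMonoidalCategory.fst Y (D.obj j') := by simp
    rw [this, Category.assoc, (hk j').1, ← MonoidalCategory.whiskerLeft_comp_assoc,
      c.w]
  refine ⟨k j₀, ⟨?_, (hk j₀).2⟩, ?_⟩
  · -- jointly epimorphic
    apply hc'.hom_ext
    intro j
    have : ((tensorLeft Y).mapCocone c).ι.app j = Y ◁ c.ι.app j := rfl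
    rw [this, ← Category.assoc,
      show (Y ◁ c.ι.app j) ≫ CartesianMonoidalCategory.fst Y c.pt =
        CartesianMonoidalCategory.fst Y (D.obj j) from CartesianMonoidalCategory.whiskerLeft_fst Y (c.ι.app j),
      hconst j₀ j, (hk j).1]
  · intro k' ⟨hk1, hk2⟩
    refine huniq j₀ k' ⟨?_, hk2⟩
    rw [← hk1, ← Category.assoc,
      show (Y ◁ c.ι.app j₀) ≫ CartesianMonoidalCategory.fst Y c.pt =
        CartesianMonoidalCategory.fst Y (D.obj j₀) from CartesianMonoidalCategory.whiskerLeft_fst Y (c.ι.app j₀)]
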